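/- Let A be a unital C*-algebra and w ∈ A invertible. Then Im(−w^{-1}) = w^{-1}·(Im w)·(w*)^{-1}; consequently Im w is strictly positive if and only if Im(−w^{-1}) is strictly positive, so w ↦ −w^{-1} is a bijection of the operator upper half-plane ℍ⁺(A) onto itself. -/

import Mathlib

noncomputable section

/-- The imaginary part `Im a = (a - a*)/(2i)` of an element of a complex star algebra. -/
def aIm {A : Type*} [NonUnitalRing A] [StarRing A] [Module ℂ A] (a : A) : A :=
  ((2 * Complex.I)⁻¹ : ℂ) • (a - star a)

/-- `k > 0`: `k` is selfadjoint, nonnegative and invertible. -/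
def StrictlyPos {A : Type*} [Ring A] [StarRing A] [PartialOrder A] (k : A) : Prop :=
  IsSelfAdjoint k ∧ 0 ≤ k ∧ IsUnit k

lemma ringInverse_eq_of {A : Type*} [Ring A] (a b : A) (h1 : a * b = 1) (h2 : b * a = 1) :
    Ring.inverse a = b := by
  have hu : IsUnit a := isUnit_iff_exists.mpr ⟨b, h1, h2⟩
  calc Ring.inverse a = Ring.inverse a * (a * b) := by rw [h1, mul_one]
    _ = (Ring.inverse a * a) * b := by rw [mul_assoc]
    _ = b := by rw [Ring.inverse_mul_cancel a hu, one_mul]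

/-- key identity -/
lemma aIm_neg_inv {A : Type*} [CStarAlgebra A] (w : A) (hw : IsUnit w) :
    aIm (-(Ring.inverse w)) = Ring.inverse w * aIm w * Ring.inverse (star w) := by
  set i := Ring.inverse w with hi
  have h1 : i * w = 1 := Ring.inverse_mul_cancel w hw
  have h2 : w * i = 1 := Ring.mul_inverse_cancel w hw
  have h3 : star w * star i = 1 := by rw [← star_mul, h1, star_one]
  have key : i * (w - star w) * star i = star i - i := by
    rw [mul_sub, sub_mul, h1, one_mul, mul_assoc, h3, mul_one]
  rw [Ring.inverse_star]
  simp only [aIm, star_neg, sub_neg_eq_add, mul_smul_comm, smul_mul_assoc, ← hi]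
  rw [key]
  congr 1
  abel

/-- strict positivity is stable under conjugation by a unit -/
lemma strictlyPos_conj {A : Type*} [CStarAlgebra A] [PartialOrder A] [StarOrderedRing A]
    {k u : A} (hk : StrictlyPos k) (hu : IsUnit u) : StrictlyPos (u * k * star u) := by
  obtain ⟨hsa, hpos, hunit⟩ := hk
  refine ⟨?_, star_right_conjugate_nonneg hpos u, (hu.mul hunit).mul hu.star⟩
  simp only [IsSelfAdjoint, star_mul, star_star, hsa.star_eq, mul_assoc]

lemma isSelfAdjoint_smul_add {A : Type*} [CStarAlgebra A] (a : A) :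
    IsSelfAdjoint (((2 : ℂ))⁻¹ • (a + star a)) := by
  rw [IsSelfAdjoint, star_smul, star_add, star_star]
  congr 1
  · simp [Complex.ext_iff]
  · abel

/-- An element whose imaginary part is strictly positive is invertible. -/
lemma isUnit_of_strictlyPos_aIm {A : Type*} [CStarAlgebra A] [PartialOrder A]
    [StarOrderedRing A] {a : A} (h : StrictlyPos (aIm a)) : IsUnit a := by
  obtain ⟨hsa, hpos, hunit⟩ := h
  set k := aIm a with hk
  set r := ((2 : ℂ))⁻¹ • (a + star a) with hr
  have hdecomp : a = r + Complex.I • k := by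
    rw [hr, hk, aIm, smul_smul]
    have : Complex.I * (2 * Complex.I)⁻¹ = (2 : ℂ)⁻¹ := by
      field_simp
    rw [this, ← smul_add]
    have h4 : a + star a + (a - star a) = (2 : ℂ) • a := by rw [two_smul]; abel
    rw [h4, smul_smul]
    norm_num
  set s := CFC.sqrt k with hs
  have hs_nonneg : 0 ≤ s := CFC.sqrt_nonneg k
  have hs_sa : IsSelfAdjoint s := IsSelfAdjoint.of_nonneg hs_nonneg
  have hss : s * s = k := by
    have := CFC.sq_sqrt k hpos
    rwa [pow_two] at this
  have hcomm : k * s = s * k := by rw [← hss, mul_assoc]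
  have hs_unit : IsUnit s := by
    refine isUnit_iff_exists.mpr ⟨s * Ring.inverse k, ?_, ?_⟩
    · rw [← mul_assoc, hss, Ring.mul_inverse_cancel k hunit]
    · have : Ring.inverse k * s = s * Ring.inverse k := by
        have h1 : Ring.inverse k * k = 1 := Ring.inverse_mul_cancel k hunit
        have h2 : k * Ring.inverse k = 1 := Ring.mul_inverse_cancel k hunit
        calc Ring.inverse k * s = Ring.inverse k * s * (k * Ring.inverse k) := by
              rw [h2, mul_one]
          _ = Ring.inverse k * (s * k) * Ring.inverse k := by noncomm_ring
          _ = Ring.inverse k * (k * s) * Ring.inverse k := by rw [hcomm]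
          _ = (Ring.inverse k * k) * (s * Ring.inverse k) := by noncomm_ring
          _ = s * Ring.inverse k := by rw [h1, one_mul]
      rw [← this, mul_assoc, hss, Ring.inverse_mul_cancel k hunit]
  set si := Ring.inverse s with hsi
  have h1 : si * s = 1 := Ring.inverse_mul_cancel s hs_unit
  have h2 : s * si = 1 := Ring.mul_inverse_cancel s hs_unit
  have hsi_sa : IsSelfAdjoint si := by
    rw [IsSelfAdjoint, hsi, ← Ring.inverse_star, hs_sa.star_eq]
  set b := si * r * si with hb
  have hb_sa : IsSelfAdjoint b := by
    have hr_sa : IsSelfAdjoint r := isSelfAdjoint_smul_add a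
    simp only [IsSelfAdjoint, hb, star_mul, hsi_sa.star_eq, hr_sa.star_eq, mul_assoc]
  have hbI : IsUnit (b + Complex.I • (1 : A)) := by
    have hnot : (-Complex.I) ∉ spectrum ℂ b := by
      intro hmem
      have := hb_sa.mem_spectrum_eq_re hmem
      simp [Complex.ext_iff] at this
    have := spectrum.notMem_iff.mp hnot
    rw [Algebra.algebraMap_eq_smul_one] at this
    have h' : ((-Complex.I) • (1 : A) - b) = -(b + Complex.I • 1) := by
      rw [neg_smul]; abel
    rw [h'] at this
    simpa using this.neg
  have hfact : a = s * (b + Complex.I • (1 : A)) * s := by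
    rw [hdecomp, hb]
    rw [mul_add, add_mul]
    have e1 : s * (si * r * si) * s = r := by
      calc s * (si * r * si) * s = (s * si) * r * (si * s) := by noncomm_ring
        _ = r := by rw [h1, h2, one_mul, mul_one]
    have e2 : s * (Complex.I • (1 : A)) * s = Complex.I • k := by
      rw [mul_smul_comm, smul_mul_assoc, mul_one, hss]
    rw [e1, e2]
  rw [hfact]
  exact (hs_unit.mul hbI).mul hs_unit

lemma strictlyPos_aIm_iff {A : Type*} [CStarAlgebra A] [PartialOrder A] [StarOrderedRing A]
    (w : A) (hw : IsUnit w) :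
    StrictlyPos (aIm w) ↔ StrictlyPos (aIm (-(Ring.inverse w))) := by
  constructor
  · intro h
    rw [aIm_neg_inv w hw, Ring.inverse_star]
    exact strictlyPos_conj h (isUnit_ringInverse.mpr hw)
  · intro h
    have key : w * aIm (-(Ring.inverse w)) * star w = aIm w := by
      rw [aIm_neg_inv w hw, ← mul_assoc, ← mul_assoc, Ring.mul_inverse_cancel w hw, one_mul,
        mul_assoc, Ring.inverse_mul_cancel (star w) hw.star, mul_one]
    rw [← key]
    exact strictlyPos_conj h hw

/-- For invertible `w` in a unital C*-algebra,
`Im(-w⁻¹) = w⁻¹·(Im w)·(w*)⁻¹`; consequently `Im w > 0` iff `Im(-w⁻¹) > 0`, and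
`w ↦ -w⁻¹` is a bijection of the operator upper half-plane onto itself. -/
theorem stmt_16 {A : Type*} [CStarAlgebra A] [PartialOrder A] [StarOrderedRing A]
    (w : A) (hw : IsUnit w) :
    aIm (-(Ring.inverse w)) = Ring.inverse w * aIm w * Ring.inverse (star w) ∧
    (StrictlyPos (aIm w) ↔ StrictlyPos (aIm (-(Ring.inverse w)))) ∧
    Set.BijOn (fun a : A => -(Ring.inverse a))
      {a : A | StrictlyPos (aIm a)} {a : A | StrictlyPos (aIm a)} := by
  refine ⟨aIm_neg_inv w hw, strictlyPos_aIm_iff w hw, ?_⟩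
  have hmaps : Set.MapsTo (fun a : A => -(Ring.inverse a))
      {a : A | StrictlyPos (aIm a)} {a : A | StrictlyPos (aIm a)} := by
    intro a ha
    exact (strictlyPos_aIm_iff a (isUnit_of_strictlyPos_aIm ha)).mp ha
  have hinvol : ∀ a ∈ {a : A | StrictlyPos (aIm a)},
      (fun a : A => -(Ring.inverse a)) ((fun a : A => -(Ring.inverse a)) a) = a := by
    intro a ha
    have hu : IsUnit a := isUnit_of_strictlyPos_aIm ha
    have : Ring.inverse (-(Ring.inverse a)) = -a := by
      refine ringInverse_eq_of _ _ ?_ ?_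
      · rw [neg_mul_neg, Ring.inverse_mul_cancel a hu]
      · rw [neg_mul_neg, Ring.mul_inverse_cancel a hu]
    simp [this]
  have hInv : Set.InvOn (fun a : A => -(Ring.inverse a)) (fun a : A => -(Ring.inverse a))
      {a : A | StrictlyPos (aIm a)} {a : A | StrictlyPos (aIm a)} := ⟨hinvol, hinvol⟩
  exact hInv.bijOn hmaps hmaps
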